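/- Let A be a finite nonempty set, P a sub-distribution on A that is not identically zero, and (ρ_a)_{a∈A} density matrices on ℂ^d. Then for every s > 0 and every positive definite matrix σ on ℂ^d with Tr σ = 1, Σ_{a∈A} P(a)^{1+s} · Tr[ σ^{-s/2} ρ_a^{1+s} σ^{-s/2} ] ≥ ( Tr[ ( Σ_{a∈A} P(a)^{1+s} · ρ_a^{1+s} )^{1/(1+s)} ] )^{1+s}. Moreover, if T := Σ_a P(a)^{1+s} ρ_a^{1+s} is positive definite, then equality holds for the particular choice σ* := T^{1/(1+s)} / Tr[ T^{1/(1+s)} ]. (Equivalently, max over normalized σ of s·H_{1+s}(A|E|ρ^{AE}‖σ) equals −(1+s)·φ(s/(1+s)|A|E|ρ^{AE}).) -/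

import Mathlib

open scoped BigOperators ComplexOrder

/-- Matrix power of a Hermitian matrix, obtained by applying `t ↦ t ^ r`
(real power) to the eigenvalues; junk value `0` for non-Hermitian input. -/
noncomputable def mpow {d : ℕ} (A : Matrix (Fin d) (Fin d) ℂ) (r : ℝ) :
    Matrix (Fin d) (Fin d) ℂ :=
  if hA : A.IsHermitian then
    (hA.eigenvectorUnitary : Matrix (Fin d) (Fin d) ℂ) *
      Matrix.diagonal (fun i => ((hA.eigenvalues i ^ r : ℝ) : ℂ)) *
      star (hA.eigenvectorUnitary : Matrix (Fin d) (Fin d) ℂ)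
  else 0


open Matrix Polynomial

variable {d : ℕ}

lemma aeval_unitary_conj (U : Matrix.unitaryGroup (Fin d) ℂ) (v : Fin d → ℂ)
    (q : Polynomial ℂ) :
    Polynomial.aeval ((U : Matrix (Fin d) (Fin d) ℂ) * Matrix.diagonal v * star (U : Matrix (Fin d) (Fin d) ℂ)) q
      = (U : Matrix (Fin d) (Fin d) ℂ) * Matrix.diagonal (fun i => q.eval (v i)) * star (U : Matrix (Fin d) (Fin d) ℂ) := by
  have hU : (U : Matrix (Fin d) (Fin d) ℂ) * star (U : Matrix (Fin d) (Fin d) ℂ) = 1 :=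
    Matrix.mem_unitaryGroup_iff.mp U.2
  have hU' : star (U : Matrix (Fin d) (Fin d) ℂ) * (U : Matrix (Fin d) (Fin d) ℂ) = 1 :=
    Matrix.mem_unitaryGroup_iff'.mp U.2
  have hpow : ∀ n : ℕ, ((U : Matrix (Fin d) (Fin d) ℂ) * Matrix.diagonal v * star (U : Matrix (Fin d) (Fin d) ℂ)) ^ n
      = (U : Matrix (Fin d) (Fin d) ℂ) * Matrix.diagonal (fun i => v i ^ n) * star (U : Matrix (Fin d) (Fin d) ℂ) := by
    intro n
    induction n with
    | zero => simp [hU]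
    | succ n ih =>
      rw [pow_succ, ih]
      calc ((U : Matrix (Fin d) (Fin d) ℂ) * Matrix.diagonal (fun i => v i ^ n) * star (U : Matrix (Fin d) (Fin d) ℂ))
            * ((U : Matrix (Fin d) (Fin d) ℂ) * Matrix.diagonal v * star (U : Matrix (Fin d) (Fin d) ℂ))
          = (U : Matrix (Fin d) (Fin d) ℂ) * (Matrix.diagonal (fun i => v i ^ n)
              * ((star (U : Matrix (Fin d) (Fin d) ℂ) * (U : Matrix (Fin d) (Fin d) ℂ)) * Matrix.diagonal v))
              * star (U : Matrix (Fin d) (Fin d) ℂ) := by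
            simp only [Matrix.mul_assoc]
        _ = (U : Matrix (Fin d) (Fin d) ℂ) * Matrix.diagonal (fun i => v i ^ (n + 1)) * star (U : Matrix (Fin d) (Fin d) ℂ) := by
            rw [hU', Matrix.one_mul, Matrix.diagonal_mul_diagonal]
            simp [pow_succ]
  induction q using Polynomial.induction_on' with
  | add p q hp hq =>
    rw [map_add, hp, hq]
    simp only [eval_add]
    have : (Matrix.diagonal fun i => Polynomial.eval (v i) p + Polynomial.eval (v i) q)
        = Matrix.diagonal (fun i => Polynomial.eval (v i) p) + Matrix.diagonal (fun i => Polynomial.eval (v i) q) := by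
      rw [← Matrix.diagonal_add]
    rw [this, Matrix.mul_add, Matrix.add_mul]
  | monomial n a =>
    rw [aeval_monomial, hpow n]
    simp only [eval_monomial]
    have : (Matrix.diagonal fun i => a * v i ^ n) = a • Matrix.diagonal (fun i => v i ^ n) := by
      rw [← Matrix.diagonal_smul]; congr 1
    rw [this]
    rw [Algebra.algebraMap_eq_smul_one, smul_mul_assoc, Matrix.one_mul,
      mul_smul_comm, smul_mul_assoc]


lemma mpow_eq_of (U : Matrix.unitaryGroup (Fin d) ℂ) (g : Fin d → ℝ)
    (A : Matrix (Fin d) (Fin d) ℂ)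
    (hA : A = (U : Matrix (Fin d) (Fin d) ℂ) * Matrix.diagonal (fun i => ((g i : ℝ) : ℂ)) * star (U : Matrix (Fin d) (Fin d) ℂ))
    (r : ℝ) :
    mpow A r = (U : Matrix (Fin d) (Fin d) ℂ) * Matrix.diagonal (fun i => ((g i ^ r : ℝ) : ℂ)) * star (U : Matrix (Fin d) (Fin d) ℂ) := by
  have hH : A.IsHermitian := by
    rw [hA, Matrix.star_eq_conjTranspose]
    exact Matrix.isHermitian_mul_mul_conjTranspose _ (Matrix.isHermitian_diagonal_of_self_adjoint _
      (by ext i; simp [Pi.star_apply, Complex.conj_ofReal]))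
  set W := hH.eigenvectorUnitary with hW
  set lam := hH.eigenvalues with hlam
  have hspec : A = (W : Matrix (Fin d) (Fin d) ℂ) * Matrix.diagonal (RCLike.ofReal ∘ lam) * star (W : Matrix (Fin d) (Fin d) ℂ) :=
    hH.spectral_theorem
  -- interpolation polynomial
  classical
  set S : Finset ℝ := (Finset.univ.image lam) ∪ (Finset.univ.image g) with hS
  set p : Polynomial ℝ := Lagrange.interpolate S id (fun x => x ^ r) with hp
  set q : Polynomial ℂ := p.map (algebraMap ℝ ℂ) with hq
  have hev : ∀ x : ℝ, x ∈ S → q.eval ((x : ℝ) : ℂ) = ((x ^ r : ℝ) : ℂ) := by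
    intro x hx
    have : q.eval ((algebraMap ℝ ℂ) x) = (algebraMap ℝ ℂ) (p.eval x) := by
      rw [hq, Polynomial.eval_map, Polynomial.eval₂_at_apply]
    have h := Lagrange.eval_interpolate_at_node (v := id) (r := fun x => x ^ r) (s := S)
      (i := x) (Set.injOn_id _) hx
    simp only [id] at h
    rw [show ((x:ℝ):ℂ) = (algebraMap ℝ ℂ) x from rfl, this, hp, h]
    rfl
  have h1 : Polynomial.aeval A q
      = (W : Matrix (Fin d) (Fin d) ℂ) * Matrix.diagonal (fun i => ((lam i ^ r : ℝ) : ℂ)) * star (W : Matrix (Fin d) (Fin d) ℂ) := by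
    conv_lhs => rw [hspec]
    rw [show Matrix.diagonal (RCLike.ofReal ∘ lam) = Matrix.diagonal (fun i => ((lam i : ℝ) : ℂ)) from rfl]
    rw [aeval_unitary_conj]
    have : (fun i => q.eval ((lam i : ℝ) : ℂ)) = fun i => ((lam i ^ r : ℝ) : ℂ) :=
      funext fun i => hev (lam i) (Finset.mem_union_left _ (Finset.mem_image_of_mem _ (Finset.mem_univ i)))
    rw [this]
  have h2 : Polynomial.aeval A q
      = (U : Matrix (Fin d) (Fin d) ℂ) * Matrix.diagonal (fun i => ((g i ^ r : ℝ) : ℂ)) * star (U : Matrix (Fin d) (Fin d) ℂ) := by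
    conv_lhs => rw [hA]
    rw [aeval_unitary_conj]
    have : (fun i => q.eval ((g i : ℝ) : ℂ)) = fun i => ((g i ^ r : ℝ) : ℂ) :=
      funext fun i => hev (g i) (Finset.mem_union_right _ (Finset.mem_image_of_mem _ (Finset.mem_univ i)))
    rw [this]
  rw [mpow, dif_pos hH, ← h1, h2]


lemma conj_mul_conj (U : Matrix.unitaryGroup (Fin d) ℂ) (v w : Fin d → ℂ) :
    ((U : Matrix (Fin d) (Fin d) ℂ) * Matrix.diagonal v * star (U : Matrix (Fin d) (Fin d) ℂ)) *
      ((U : Matrix (Fin d) (Fin d) ℂ) * Matrix.diagonal w * star (U : Matrix (Fin d) (Fin d) ℂ))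
    = (U : Matrix (Fin d) (Fin d) ℂ) * Matrix.diagonal (fun i => v i * w i) * star (U : Matrix (Fin d) (Fin d) ℂ) := by
  have hU' : star (U : Matrix (Fin d) (Fin d) ℂ) * (U : Matrix (Fin d) (Fin d) ℂ) = 1 :=
    Matrix.mem_unitaryGroup_iff'.mp U.2
  calc ((U : Matrix (Fin d) (Fin d) ℂ) * Matrix.diagonal v * star (U : Matrix (Fin d) (Fin d) ℂ)) *
      ((U : Matrix (Fin d) (Fin d) ℂ) * Matrix.diagonal w * star (U : Matrix (Fin d) (Fin d) ℂ))
      = (U : Matrix (Fin d) (Fin d) ℂ) * (Matrix.diagonal v * ((star (U : Matrix (Fin d) (Fin d) ℂ) * (U : Matrix (Fin d) (Fin d) ℂ)) * Matrix.diagonal w)) * star (U : Matrix (Fin d) (Fin d) ℂ) := by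
        simp only [Matrix.mul_assoc]
    _ = _ := by rw [hU', Matrix.one_mul, Matrix.diagonal_mul_diagonal]

lemma trace_conj (U : Matrix.unitaryGroup (Fin d) ℂ) (v : Fin d → ℂ) :
    ((U : Matrix (Fin d) (Fin d) ℂ) * Matrix.diagonal v * star (U : Matrix (Fin d) (Fin d) ℂ)).trace = ∑ i, v i := by
  have hU' : star (U : Matrix (Fin d) (Fin d) ℂ) * (U : Matrix (Fin d) (Fin d) ℂ) = 1 :=
    Matrix.mem_unitaryGroup_iff'.mp U.2
  rw [Matrix.trace_mul_comm, ← Matrix.mul_assoc, hU', Matrix.one_mul, Matrix.trace_diagonal]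

lemma trace_conj_conj (U W : Matrix.unitaryGroup (Fin d) ℂ) (ν lam : Fin d → ℝ) :
    (((U : Matrix (Fin d) (Fin d) ℂ) * Matrix.diagonal (fun i => ((ν i : ℝ) : ℂ)) * star (U : Matrix (Fin d) (Fin d) ℂ)) *
      (((W : Matrix (Fin d) (Fin d) ℂ) * Matrix.diagonal (fun i => ((lam i : ℝ) : ℂ)) * star (W : Matrix (Fin d) (Fin d) ℂ))) *
      ((U : Matrix (Fin d) (Fin d) ℂ) * Matrix.diagonal (fun i => ((ν i : ℝ) : ℂ)) * star (U : Matrix (Fin d) (Fin d) ℂ))).trace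
    = ((∑ i, ∑ j, ν i ^ 2 * lam j * Complex.normSq ((star (U : Matrix (Fin d) (Fin d) ℂ) * (W : Matrix (Fin d) (Fin d) ℂ)) i j) : ℝ) : ℂ) := by
  set Uc : Matrix (Fin d) (Fin d) ℂ := (U : Matrix (Fin d) (Fin d) ℂ)
  set Wc : Matrix (Fin d) (Fin d) ℂ := (W : Matrix (Fin d) (Fin d) ℂ)
  set Q : Matrix (Fin d) (Fin d) ℂ := star Uc * Wc with hQ
  have hU' : star Uc * Uc = 1 := Matrix.mem_unitaryGroup_iff'.mp U.2
  have hstarQ : star Wc * Uc = star Q := by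
    rw [hQ]; simp
  set D1 : Matrix (Fin d) (Fin d) ℂ := Matrix.diagonal (fun i => ((ν i : ℝ) : ℂ)) with hD1
  set D2 : Matrix (Fin d) (Fin d) ℂ := Matrix.diagonal (fun i => ((lam i : ℝ) : ℂ)) with hD2
  have key : (Uc * D1 * star Uc) * (Wc * D2 * star Wc) * (Uc * D1 * star Uc)
      = Uc * (D1 * Q * D2 * star Q * D1) * star Uc := by
    rw [hQ, ← hstarQ]
    simp only [Matrix.mul_assoc]
  rw [key, Matrix.trace_mul_comm, ← Matrix.mul_assoc, hU', Matrix.one_mul]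
  have expand : D1 * Q * D2 * star Q * D1 = D1 * ((Q * D2) * star Q) * D1 := by
    simp only [Matrix.mul_assoc]
  have entry : ∀ i, (D1 * ((Q * D2) * star Q) * D1) i i
      = ∑ j, (((ν i : ℝ) : ℂ) ^ 2 * ((lam j : ℝ) : ℂ) * ((Complex.normSq (Q i j) : ℝ) : ℂ)) := by
    intro i
    rw [hD1, Matrix.mul_diagonal, Matrix.diagonal_mul, Matrix.mul_apply, Finset.mul_sum,
      Finset.sum_mul]
    refine Finset.sum_congr rfl (fun j _ => ?_)
    rw [hD2, Matrix.mul_diagonal, Matrix.star_eq_conjTranspose, Matrix.conjTranspose_apply,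
      Complex.star_def]
    linear_combination (((ν i : ℝ) : ℂ) ^ 2 * ((lam j : ℝ) : ℂ)) * Complex.mul_conj (Q i j)
  rw [expand, Matrix.trace]
  push_cast
  refine Finset.sum_congr rfl (fun i _ => ?_)
  rw [Matrix.diag_apply, entry i]


lemma psd_real_smul {M : Matrix (Fin d) (Fin d) ℂ} (hM : M.PosSemidef) {c : ℝ} (hc : 0 ≤ c) :
    (c • M).PosSemidef := by
  constructor
  · have : (c • M)ᴴ = c • Mᴴ := by
      ext i j
      simp [Matrix.conjTranspose_apply, Matrix.smul_apply, Complex.real_smul, _root_.map_mul]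
    rw [Matrix.IsHermitian, this, hM.1.eq]
  · intro x
    exact (hM.smul hc).2 x



lemma mpow_posSemidef {A : Matrix (Fin d) (Fin d) ℂ} (hA : A.PosSemidef) (r : ℝ) :
    (mpow A r).PosSemidef := by
  rw [mpow, dif_pos hA.1, Matrix.star_eq_conjTranspose]
  apply Matrix.PosSemidef.mul_mul_conjTranspose_same
  refine Matrix.posSemidef_diagonal_iff.mpr fun i => ?_
  exact Complex.zero_le_real.mpr (Real.rpow_nonneg (hA.eigenvalues_nonneg i) r)

lemma mpow_spectral {A : Matrix (Fin d) (Fin d) ℂ} (hA : A.IsHermitian) (r : ℝ) :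
    mpow A r = (hA.eigenvectorUnitary : Matrix (Fin d) (Fin d) ℂ) *
      Matrix.diagonal (fun i => ((hA.eigenvalues i ^ r : ℝ) : ℂ)) *
      star (hA.eigenvectorUnitary : Matrix (Fin d) (Fin d) ℂ) := by
  rw [mpow, dif_pos hA]

lemma unitary_row_sum {Q : Matrix (Fin d) (Fin d) ℂ} (h : Q * star Q = 1) (i : Fin d) :
    ∑ j, Complex.normSq (Q i j) = 1 := by
  have h1 : (Q * star Q) i i = (1 : Matrix (Fin d) (Fin d) ℂ) i i := by rw [h]
  rw [Matrix.mul_apply, Matrix.one_apply_eq] at h1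
  have h2 : ∑ j, ((Complex.normSq (Q i j) : ℝ) : ℂ) = 1 := by
    rw [← h1]
    refine Finset.sum_congr rfl fun j _ => ?_
    rw [Matrix.star_eq_conjTranspose, Matrix.conjTranspose_apply, Complex.star_def,
      Complex.mul_conj]
  have := congrArg Complex.re h2
  simpa using this

lemma unitary_col_sum {Q : Matrix (Fin d) (Fin d) ℂ} (h : star Q * Q = 1) (j : Fin d) :
    ∑ i, Complex.normSq (Q i j) = 1 := by
  have h1 : (star Q * Q) j j = (1 : Matrix (Fin d) (Fin d) ℂ) j j := by rw [h]
  rw [Matrix.mul_apply, Matrix.one_apply_eq] at h1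
  have h2 : ∑ i, ((Complex.normSq (Q i j) : ℝ) : ℂ) = 1 := by
    rw [← h1]
    refine Finset.sum_congr rfl fun i _ => ?_
    rw [Matrix.star_eq_conjTranspose, Matrix.conjTranspose_apply, Complex.star_def,
      mul_comm, Complex.mul_conj]
  have := congrArg Complex.re h2
  simpa using this

set_option maxHeartbeats 2000000 in
theorem stmt_19 {A : Type*} [Fintype A] [Nonempty A] {d : ℕ} (hd : 1 ≤ d)
    (P : A → ℝ) (hP0 : ∀ a, 0 ≤ P a) (hP1 : ∑ a, P a ≤ 1) (hPne : P ≠ 0)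
    (ρ : A → Matrix (Fin d) (Fin d) ℂ)
    (hρ : ∀ a, (ρ a).PosSemidef) (htr : ∀ a, (ρ a).trace = 1)
    (s : ℝ) (hs : 0 < s) :
    (∀ σ : Matrix (Fin d) (Fin d) ℂ, σ.PosDef → σ.trace = 1 →
      ((mpow (∑ a, (P a ^ (1 + s)) • mpow (ρ a) (1 + s)) (1 / (1 + s))).trace.re) ^ (1 + s) ≤
        ∑ a, P a ^ (1 + s) *
          (mpow σ (-s / 2) * mpow (ρ a) (1 + s) * mpow σ (-s / 2)).trace.re) ∧
    ((∑ a, (P a ^ (1 + s)) • mpow (ρ a) (1 + s)).PosDef →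
      ∑ a, P a ^ (1 + s) *
          (mpow (((mpow (∑ a', (P a' ^ (1 + s)) • mpow (ρ a') (1 + s))
                  (1 / (1 + s))).trace.re)⁻¹ •
                mpow (∑ a', (P a' ^ (1 + s)) • mpow (ρ a') (1 + s)) (1 / (1 + s)))
              (-s / 2) *
            mpow (ρ a) (1 + s) *
            mpow (((mpow (∑ a', (P a' ^ (1 + s)) • mpow (ρ a') (1 + s))
                  (1 / (1 + s))).trace.re)⁻¹ •
                mpow (∑ a', (P a' ^ (1 + s)) • mpow (ρ a') (1 + s)) (1 / (1 + s)))
              (-s / 2)).trace.re =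
        ((mpow (∑ a, (P a ^ (1 + s)) • mpow (ρ a) (1 + s)) (1 / (1 + s))).trace.re) ^
          (1 + s)) := by
  classical
  have h1s : (0:ℝ) < 1 + s := by linarith
  haveI hFin : Nonempty (Fin d) := ⟨⟨0, hd⟩⟩
  set T : Matrix (Fin d) (Fin d) ℂ := ∑ a, (P a ^ (1 + s)) • mpow (ρ a) (1 + s) with hTdef
  have hρm : ∀ a, (mpow (ρ a) (1+s)).PosSemidef := fun a => mpow_posSemidef (hρ a) _
  have hTpsd : T.PosSemidef := by
    rw [hTdef]
    apply Finset.sum_induction _ _ (fun A B hA hB => hA.add hB) Matrix.PosSemidef.zero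
    intro a _
    exact psd_real_smul (hρm a) (Real.rpow_nonneg (hP0 a) _)
  have hTH : T.IsHermitian := hTpsd.1
  set W := hTH.eigenvectorUnitary with hWdef
  set lam := hTH.eigenvalues with hlamdef
  have hlam0 : ∀ j, 0 ≤ lam j := hTpsd.eigenvalues_nonneg
  have hTspec : T = (W : Matrix (Fin d) (Fin d) ℂ) * Matrix.diagonal (fun i => ((lam i : ℝ):ℂ))
      * star (W : Matrix (Fin d) (Fin d) ℂ) := hTH.spectral_theorem
  have hmT : mpow T (1/(1+s)) = (W : Matrix (Fin d) (Fin d) ℂ)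
      * Matrix.diagonal (fun i => ((lam i ^ (1/(1+s)) : ℝ):ℂ))
      * star (W : Matrix (Fin d) (Fin d) ℂ) := mpow_eq_of W lam T hTspec _
  have htrmT : (mpow T (1/(1+s))).trace.re = ∑ j, lam j ^ (1/(1+s)) := by
    rw [hmT, trace_conj]
    simp [Complex.ofReal_sum]
  have hlin : ∀ X : Matrix (Fin d) (Fin d) ℂ,
      ∑ a, P a ^ (1+s) * (X * mpow (ρ a) (1+s) * X).trace.re = (X * T * X).trace.re := by
    intro X
    have hXTX : X * T * X = ∑ a, (P a ^ (1+s)) • (X * mpow (ρ a) (1+s) * X) := by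
      rw [hTdef, Matrix.mul_sum, Matrix.sum_mul]
      exact Finset.sum_congr rfl fun a _ => by rw [mul_smul_comm, smul_mul_assoc]
    rw [hXTX, Matrix.trace_sum, Complex.re_sum]
    refine Finset.sum_congr rfl fun a _ => ?_
    rw [Matrix.trace_smul]
    simp [Complex.real_smul, Complex.mul_re]
  constructor
  · intro σ hσ hσ1
    have hσH : σ.IsHermitian := hσ.1
    set U := hσH.eigenvectorUnitary with hUdef
    set μ := hσH.eigenvalues with hμdef
    have hμpos : ∀ i, 0 < μ i := hσ.eigenvalues_pos
    have hσspec : σ = (U : Matrix (Fin d) (Fin d) ℂ) * Matrix.diagonal (fun i => ((μ i : ℝ):ℂ))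
        * star (U : Matrix (Fin d) (Fin d) ℂ) := hσH.spectral_theorem
    have hXm : mpow σ (-s/2) = (U : Matrix (Fin d) (Fin d) ℂ)
        * Matrix.diagonal (fun i => ((μ i ^ (-s/2) : ℝ):ℂ))
        * star (U : Matrix (Fin d) (Fin d) ℂ) := mpow_eq_of U μ σ hσspec _
    set Q : Matrix (Fin d) (Fin d) ℂ :=
      star (U : Matrix (Fin d) (Fin d) ℂ) * (W : Matrix (Fin d) (Fin d) ℂ) with hQdef
    set w : Fin d → Fin d → ℝ := fun i j => Complex.normSq (Q i j) with hwdef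
    have hw0 : ∀ i j, 0 ≤ w i j := fun i j => Complex.normSq_nonneg _
    have hQmem : Q ∈ Matrix.unitaryGroup (Fin d) ℂ := mul_mem (Unitary.star_mem U.2) W.2
    have hrow : ∀ i, ∑ j, w i j = 1 := fun i =>
      unitary_row_sum (Matrix.mem_unitaryGroup_iff.mp hQmem) i
    have hcol : ∀ j, ∑ i, w i j = 1 := fun j =>
      unitary_col_sum (Matrix.mem_unitaryGroup_iff'.mp hQmem) j
    set t : Fin d → ℝ := fun i => ∑ j, w i j * lam j with htdef
    have ht0 : ∀ i, 0 ≤ t i := fun i =>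
      Finset.sum_nonneg fun j _ => mul_nonneg (hw0 i j) (hlam0 j)
    have hre : ((mpow σ (-s/2)) * T * (mpow σ (-s/2))).trace.re = ∑ i, μ i ^ (-s) * t i := by
      have htr2 : ((mpow σ (-s/2)) * T * (mpow σ (-s/2))).trace
          = ((∑ i, ∑ j, (fun i => μ i ^ (-s/2)) i ^ 2 * lam j * Complex.normSq (Q i j) : ℝ) : ℂ) := by
        rw [hXm]
        conv_lhs => rw [hTspec]
        exact trace_conj_conj U W _ lam
      rw [htr2, Complex.ofReal_re]
      refine Finset.sum_congr rfl fun i _ => ?_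
      rw [htdef]
      simp only []
      rw [Finset.mul_sum]
      refine Finset.sum_congr rfl fun j _ => ?_
      have h2 : (μ i ^ (-s/2 : ℝ)) ^ (2:ℕ) = μ i ^ (-s : ℝ) := by
        rw [← Real.rpow_natCast (μ i ^ (-s/2 : ℝ)) 2, ← Real.rpow_mul (hμpos i).le]
        norm_num
      rw [h2]; ring
    rw [htrmT, hlin (mpow σ (-s/2)), hre]
    have hr1 : (1/(1+s)) * (1+s) = 1 := by field_simp
    have stepA : ∑ j, lam j ^ (1/(1+s)) ≤ ∑ i, t i ^ (1/(1+s)) := by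
      have e1 : ∑ j, lam j ^ (1/(1+s)) = ∑ i, ∑ j, w i j * lam j ^ (1/(1+s)) := by
        rw [Finset.sum_comm]
        refine Finset.sum_congr rfl fun j _ => ?_
        rw [← Finset.sum_mul, hcol j, one_mul]
      rw [e1]
      refine Finset.sum_le_sum fun i _ => ?_
      have h := Real.arith_mean_le_rpow_mean Finset.univ (w i) (fun j => lam j ^ (1/(1+s)))
        (fun j _ => hw0 i j) (hrow i) (fun j _ => Real.rpow_nonneg (hlam0 j) _)
        (p := 1+s) (by linarith)
      calc ∑ j, w i j * lam j ^ (1/(1+s))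
          ≤ (∑ j, w i j * (lam j ^ (1/(1+s)))^(1+s)) ^ (1/(1+s)) := h
        _ = t i ^ (1/(1+s)) := by
            congr 1
            rw [htdef]
            refine Finset.sum_congr rfl fun j _ => ?_
            rw [← Real.rpow_mul (hlam0 j), hr1, Real.rpow_one]
    have hμ1 : ∑ i, μ i = 1 := by
      have h3 : ((∑ i, μ i : ℝ) : ℂ) = 1 := by
        push_cast
        rw [← _root_.trace_conj U (fun i => ((μ i : ℝ):ℂ)), ← hσspec, hσ1]
      exact_mod_cast h3
    have hconj : Real.HolderConjugate (1+s) ((1+s)/s) := by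
      rw [Real.holderConjugate_iff]; constructor
      · linarith
      · rw [inv_div]
        field_simp
    have stepB : ∑ i, t i ^ (1/(1+s)) ≤ (∑ i, t i * μ i ^ (-s)) ^ (1/(1+s)) := by
      have e2 : ∀ i : Fin d, t i ^ (1/(1+s))
          = ((t i * μ i ^ (-s)) ^ (1/(1+s))) * (μ i ^ (s/(1+s))) := by
        intro i
        rw [Real.mul_rpow (ht0 i) (Real.rpow_nonneg (hμpos i).le _),
          ← Real.rpow_mul (hμpos i).le, mul_assoc, ← Real.rpow_add (hμpos i)]
        have : -s * (1/(1+s)) + s/(1+s) = 0 := by field_simp; ring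
        rw [this, Real.rpow_zero, mul_one]
      have e3 : ∀ i : Fin d, ((t i * μ i ^ (-s)) ^ (1/(1+s))) ^ (1+s) = t i * μ i ^ (-s) := by
        intro i
        rw [← Real.rpow_mul (mul_nonneg (ht0 i) (Real.rpow_nonneg (hμpos i).le _)), hr1,
          Real.rpow_one]
      have e4 : ∀ i : Fin d, (μ i ^ (s/(1+s))) ^ ((1+s)/s) = μ i := by
        intro i
        rw [← Real.rpow_mul (hμpos i).le]
        rw [show s/(1+s) * ((1+s)/s) = 1 by field_simp, Real.rpow_one]
      have h := Real.inner_le_Lp_mul_Lq_of_nonneg (s := Finset.univ)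
        (f := fun i => (t i * μ i ^ (-s)) ^ (1/(1+s))) (g := fun i => μ i ^ (s/(1+s))) hconj
        (fun i _ => Real.rpow_nonneg (mul_nonneg (ht0 i) (Real.rpow_nonneg (hμpos i).le _)) _)
        (fun i _ => Real.rpow_nonneg (hμpos i).le _)
      calc ∑ i, t i ^ (1/(1+s))
          = ∑ i, ((t i * μ i ^ (-s)) ^ (1/(1+s))) * (μ i ^ (s/(1+s))) :=
            Finset.sum_congr rfl fun i _ => e2 i
        _ ≤ (∑ i, (((t i * μ i ^ (-s)) ^ (1/(1+s))) ^ (1+s))) ^ (1/(1+s))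
            * (∑ i, (μ i ^ (s/(1+s))) ^ ((1+s)/s)) ^ (1/((1+s)/s)) := h
        _ = (∑ i, t i * μ i ^ (-s)) ^ (1/(1+s)) := by
            rw [Finset.sum_congr rfl fun i _ => e3 i, Finset.sum_congr rfl fun i _ => e4 i,
              hμ1, Real.one_rpow, mul_one]
    have hB0 : 0 ≤ ∑ i, μ i ^ (-s) * t i :=
      Finset.sum_nonneg fun i _ => mul_nonneg (Real.rpow_nonneg (hμpos i).le _) (ht0 i)
    have hfinal : ∑ j, lam j ^ (1/(1+s)) ≤ (∑ i, μ i ^ (-s) * t i) ^ (1/(1+s)) := by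
      refine stepA.trans (stepB.trans_eq ?_)
      congr 1
      exact Finset.sum_congr rfl fun i _ => mul_comm _ _
    have hfin2 := Real.rpow_le_rpow
      (Finset.sum_nonneg fun j _ => Real.rpow_nonneg (hlam0 j) _) hfinal h1s.le
    rwa [← Real.rpow_mul hB0, hr1, Real.rpow_one] at hfin2
  · intro hTpd
    have hlampos : ∀ j, 0 < lam j := fun j => hTpd.eigenvalues_pos j
    set c : ℝ := (mpow T (1 / (1 + s))).trace.re with hcdef
    have hcpos : 0 < c := by
      rw [htrmT]
      exact Finset.sum_pos (fun j _ => Real.rpow_pos_of_pos (hlampos j) _) Finset.univ_nonempty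
    set g : Fin d → ℝ := fun i => c⁻¹ * lam i ^ (1/(1+s)) with hgdef
    have hgpos : ∀ i, 0 < g i := fun i =>
      mul_pos (inv_pos.mpr hcpos) (Real.rpow_pos_of_pos (hlampos i) _)
    have hσstar : c⁻¹ • mpow T (1/(1+s)) = (W : Matrix (Fin d) (Fin d) ℂ)
        * Matrix.diagonal (fun i => ((g i : ℝ):ℂ)) * star (W : Matrix (Fin d) (Fin d) ℂ) := by
      rw [hmT]
      rw [show (fun i => ((g i : ℝ):ℂ))
          = c⁻¹ • (fun i => ((lam i ^ (1/(1+s)) : ℝ):ℂ)) from funext fun i => by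
        simp only [hgdef, Pi.smul_apply, Complex.real_smul]
        push_cast
        ring]
      rw [Matrix.diagonal_smul, mul_smul_comm, smul_mul_assoc]
    have hXm2 : mpow (c⁻¹ • mpow T (1/(1+s))) (-s/2) = (W : Matrix (Fin d) (Fin d) ℂ)
        * Matrix.diagonal (fun i => ((g i ^ (-s/2) : ℝ):ℂ))
        * star (W : Matrix (Fin d) (Fin d) ℂ) := mpow_eq_of W g _ hσstar _
    rw [hlin (mpow (c⁻¹ • mpow T (1/(1+s))) (-s/2)), hXm2]
    conv_lhs => rw [hTspec]
    rw [conj_mul_conj, conj_mul_conj, _root_.trace_conj, Complex.re_sum]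
    simp only [← Complex.ofReal_mul, Complex.ofReal_re]
    have e5 : ∀ i : Fin d, g i ^ (-s/2 : ℝ) * lam i * g i ^ (-s/2 : ℝ)
        = c ^ s * lam i ^ (1/(1+s)) := by
      intro i
      have h6 : g i ^ (-s/2 : ℝ) * g i ^ (-s/2 : ℝ) = g i ^ (-s : ℝ) := by
        rw [← Real.rpow_add (hgpos i)]
        norm_num
      have h7 : g i ^ (-s : ℝ) = c ^ s * lam i ^ ((1/(1+s)) * (-s)) := by
        rw [hgdef]
        simp only []
        rw [Real.mul_rpow (inv_nonneg.mpr hcpos.le) (Real.rpow_nonneg (hlampos i).le _),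
          ← Real.rpow_mul (hlampos i).le]
        congr 1
        rw [Real.inv_rpow hcpos.le, ← Real.rpow_neg hcpos.le]
        norm_num
      calc g i ^ (-s/2 : ℝ) * lam i * g i ^ (-s/2 : ℝ)
          = lam i * (g i ^ (-s/2 : ℝ) * g i ^ (-s/2 : ℝ)) := by ring
        _ = lam i * (c ^ s * lam i ^ ((1/(1+s)) * (-s))) := by rw [h6, h7]
        _ = c ^ s * (lam i ^ (1:ℝ) * lam i ^ ((1/(1+s)) * (-s))) := by
            rw [Real.rpow_one]; ring
        _ = c ^ s * lam i ^ (1/(1+s)) := by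
            rw [← Real.rpow_add (hlampos i)]
            congr 1
            field_simp
            ring_nf
    rw [Finset.sum_congr rfl fun i _ => e5 i, ← Finset.mul_sum, ← htrmT,
      show (1:ℝ)+s = s+1 from by ring, Real.rpow_add hcpos, Real.rpow_one]
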